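/- For a complex polynomial f = ∑_{i=0}^n aᵢXⁱ with aₙ ≠ 0, the Mahler measure satisfies 2^{-n}·Len(f) ≤ Mea(f) ≤ ‖f‖, where Len(f) = ∑|aᵢ| and ‖f‖ = (∑|aᵢ|²)^{1/2}. -/

import Mathlib

open Polynomial
open Complex

noncomputable def Nsq (p : Polynomial ℂ) : ℝ := ∑' i, Complex.normSq (p.coeff i)
noncomputable def Len (p : Polynomial ℂ) : ℝ := ∑' i, ‖p.coeff i‖

lemma Nsq_eq_sum (p : Polynomial ℂ) {m : ℕ} (h : p.natDegree < m) :
    Nsq p = ∑ i ∈ Finset.range m, Complex.normSq (p.coeff i) := by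
  refine tsum_eq_sum fun i hi => ?_
  rw [p.coeff_eq_zero_of_natDegree_lt (lt_of_lt_of_le h (by simpa using Finset.mem_range.not.mp hi))]
  simp

lemma Len_eq_sum (p : Polynomial ℂ) {m : ℕ} (h : p.natDegree < m) :
    Len p = ∑ i ∈ Finset.range m, ‖p.coeff i‖ := by
  refine tsum_eq_sum fun i hi => ?_
  rw [p.coeff_eq_zero_of_natDegree_lt (lt_of_lt_of_le h (by simpa using Finset.mem_range.not.mp hi))]
  simp

lemma coeff_X_sub_C_mul (z : ℂ) (p : Polynomial ℂ) (i : ℕ) :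
    ((X - C z) * p).coeff (i + 1) = p.coeff i - z * p.coeff (i + 1) := by
  rw [sub_mul, coeff_sub, coeff_X_mul, coeff_C_mul]

lemma coeff_X_sub_C_mul_zero (z : ℂ) (p : Polynomial ℂ) :
    ((X - C z) * p).coeff 0 = - (z * p.coeff 0) := by
  rw [sub_mul, coeff_sub, coeff_C_mul]
  simp [coeff_X_mul_zero]

lemma coeff_swap_mul (z : ℂ) (p : Polynomial ℂ) (i : ℕ) :
    ((C (starRingEnd ℂ z) * X - 1) * p).coeff (i + 1)
      = (starRingEnd ℂ z) * p.coeff i - p.coeff (i + 1) := by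
  rw [sub_mul, coeff_sub, one_mul, mul_assoc, coeff_C_mul, coeff_X_mul]

lemma coeff_swap_mul_zero (z : ℂ) (p : Polynomial ℂ) :
    ((C (starRingEnd ℂ z) * X - 1) * p).coeff 0 = - p.coeff 0 := by
  rw [sub_mul, coeff_sub, one_mul, mul_assoc, coeff_C_mul]
  simp [coeff_X_mul_zero]

lemma shift_sum (p : Polynomial ℂ) {n : ℕ} (h : p.natDegree ≤ n) :
    ∑ i ∈ Finset.range (n + 1), Complex.normSq (p.coeff (i + 1))
      = ∑ i ∈ Finset.range (n + 1), Complex.normSq (p.coeff i) - Complex.normSq (p.coeff 0) := by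
  have h1 : ∑ i ∈ Finset.range (n + 2), Complex.normSq (p.coeff i)
      = ∑ i ∈ Finset.range (n + 1), Complex.normSq (p.coeff (i + 1))
        + Complex.normSq (p.coeff 0) := Finset.sum_range_succ' _ _
  have h2 : ∑ i ∈ Finset.range (n + 2), Complex.normSq (p.coeff i)
      = ∑ i ∈ Finset.range (n + 1), Complex.normSq (p.coeff i)
        + Complex.normSq (p.coeff (n + 1)) := Finset.sum_range_succ _ _
  rw [p.coeff_eq_zero_of_natDegree_lt (by omega)] at h2
  simp at h2
  linarith

lemma swap_Nsq (z : ℂ) (p : Polynomial ℂ) :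
    Nsq ((X - C z) * p) = Nsq ((C (starRingEnd ℂ z) * X - 1) * p) := by
  rcases eq_or_ne p 0 with rfl | hp
  · simp
  set n := p.natDegree
  have hd1 : ((X - C z) * p).natDegree < n + 1 + 1 := by
    have := natDegree_mul_le (p := X - C z) (q := p)
    have := natDegree_X_sub_C_le (r := z)
    omega
  have hd2 : ((C (starRingEnd ℂ z) * X - 1) * p).natDegree < n + 1 + 1 := by
    have h1 := natDegree_mul_le (p := C (starRingEnd ℂ z) * X - 1) (q := p)
    have h2 : (C (starRingEnd ℂ z) * X - 1 : Polynomial ℂ).natDegree ≤ 1 := by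
      refine natDegree_sub_le_iff_left ?_ |>.mpr ?_ <;>
        simp [natDegree_C_mul_le _ _ |>.trans] <;>
        exact (natDegree_C_mul_le _ _).trans (by simp)
    omega
  have L1 : ∑ i ∈ Finset.range (n + 1 + 1), Complex.normSq (((X - C z) * p).coeff i)
      = (∑ i ∈ Finset.range (n + 1), Complex.normSq (((X - C z) * p).coeff (i + 1)))
        + Complex.normSq (((X - C z) * p).coeff 0) := Finset.sum_range_succ' _ _
  have R1 : ∑ i ∈ Finset.range (n + 1 + 1),
        Complex.normSq (((C (starRingEnd ℂ z) * X - 1) * p).coeff i)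
      = (∑ i ∈ Finset.range (n + 1),
          Complex.normSq (((C (starRingEnd ℂ z) * X - 1) * p).coeff (i + 1)))
        + Complex.normSq (((C (starRingEnd ℂ z) * X - 1) * p).coeff 0) :=
    Finset.sum_range_succ' _ _
  rw [Nsq_eq_sum _ hd1, Nsq_eq_sum _ hd2, L1, R1]
  simp only [coeff_X_sub_C_mul, coeff_X_sub_C_mul_zero, coeff_swap_mul, coeff_swap_mul_zero,
    Complex.normSq_sub, Complex.normSq_neg, Complex.normSq_mul, Complex.normSq_conj]
  have hcross : ∀ i, (p.coeff i * (starRingEnd ℂ) (z * p.coeff (i + 1))).re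
      = ((starRingEnd ℂ) z * p.coeff i * (starRingEnd ℂ) (p.coeff (i + 1))).re := by
    intro i
    rw [map_mul]
    ring_nf
  simp only [hcross]
  rw [Finset.sum_sub_distrib, Finset.sum_sub_distrib, Finset.sum_add_distrib,
    Finset.sum_add_distrib, ← Finset.mul_sum, ← Finset.mul_sum,
    shift_sum p (le_refl n)]
  rw [← Finset.mul_sum]
  ring

lemma swap_natDegree {w : ℂ} (hw : w ≠ 0) : (C w * X - 1 : Polynomial ℂ).natDegree = 1 := by
  rw [show (1 : Polynomial ℂ) = C 1 from (map_one C).symm, natDegree_sub_C,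
    natDegree_C_mul_X w hw]

lemma swap_leadingCoeff {w : ℂ} (hw : w ≠ 0) : (C w * X - 1 : Polynomial ℂ).leadingCoeff = w := by
  rw [leadingCoeff, swap_natDegree hw]
  simp [coeff_one]

lemma conj_ne_zero {z : ℂ} (h : 1 < ‖z‖) : starRingEnd ℂ z ≠ 0 := by
  intro h0
  rw [map_eq_zero_iff _ (starRingEnd ℂ).injective] at h0
  subst h0
  norm_num at h

noncomputable def fac2 (z : ℂ) : Polynomial ℂ :=
  if 1 < ‖z‖ then C (starRingEnd ℂ z) * X - 1 else X - C z

lemma swap_Nsq' (z : ℂ) (p : Polynomial ℂ) :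
    Nsq ((X - C z) * p) = Nsq (fac2 z * p) := by
  unfold fac2
  split
  · exact swap_Nsq z p
  · rfl

lemma Nsq_prod_swap (s : Multiset ℂ) : ∀ c : Polynomial ℂ,
    Nsq ((s.map fun z => X - C z).prod * c) = Nsq ((s.map fac2).prod * c) := by
  induction s using Multiset.induction_on with
  | empty => intro c; simp
  | cons a s ih =>
    intro c
    calc Nsq ((Multiset.map (fun z => X - C z) (a ::ₘ s)).prod * c)
        = Nsq ((X - C a) * ((Multiset.map (fun z => X - C z) s).prod * c)) := by
          rw [Multiset.map_cons, Multiset.prod_cons, mul_assoc]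
      _ = Nsq (fac2 a * ((Multiset.map (fun z => X - C z) s).prod * c)) := swap_Nsq' a _
      _ = Nsq ((Multiset.map (fun z => X - C z) s).prod * (fac2 a * c)) := by
          rw [mul_left_comm]
      _ = Nsq ((Multiset.map fac2 s).prod * (fac2 a * c)) := ih _
      _ = Nsq ((Multiset.map fac2 (a ::ₘ s)).prod * c) := by
          rw [Multiset.map_cons, Multiset.prod_cons, mul_assoc, mul_left_comm]

lemma fac2_natDegree (z : ℂ) : (fac2 z).natDegree = 1 := by
  unfold fac2
  split
  · exact swap_natDegree (conj_ne_zero (by assumption))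
  · exact natDegree_X_sub_C z

lemma fac2_leadingCoeff (z : ℂ) :
    ‖(fac2 z).leadingCoeff‖ = max 1 (‖z‖) := by
  unfold fac2
  split
  · rename_i h
    rw [swap_leadingCoeff (conj_ne_zero h)]
    simp [max_eq_right (le_of_lt h)]
  · rename_i h
    rw [leadingCoeff_X_sub_C]
    simp [max_eq_left (le_of_not_gt h)]

lemma Len_nonneg (p : Polynomial ℂ) : 0 ≤ Len p :=
  tsum_nonneg fun i => norm_nonneg _

lemma abs_shift_sum (p : Polynomial ℂ) {n : ℕ} (h : p.natDegree ≤ n) :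
    ∑ i ∈ Finset.range (n + 1), ‖p.coeff (i + 1)‖
      = ∑ i ∈ Finset.range (n + 1), ‖p.coeff i‖ - ‖p.coeff 0‖ := by
  have h1 : ∑ i ∈ Finset.range (n + 2), ‖p.coeff i‖
      = ∑ i ∈ Finset.range (n + 1), ‖p.coeff (i + 1)‖
        + ‖p.coeff 0‖ := Finset.sum_range_succ' _ _
  have h2 : ∑ i ∈ Finset.range (n + 2), ‖p.coeff i‖
      = ∑ i ∈ Finset.range (n + 1), ‖p.coeff i‖
        + ‖p.coeff (n + 1)‖ := Finset.sum_range_succ _ _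
  rw [p.coeff_eq_zero_of_natDegree_lt (by omega)] at h2
  simp at h2
  linarith

lemma Len_mul_le (z : ℂ) (p : Polynomial ℂ) :
    Len ((X - C z) * p) ≤ 2 * max 1 (‖z‖) * Len p := by
  set n := p.natDegree
  have hd1 : ((X - C z) * p).natDegree < n + 1 + 1 := by
    have := natDegree_mul_le (p := X - C z) (q := p)
    have := natDegree_X_sub_C_le (r := z)
    omega
  have L1 : ∑ i ∈ Finset.range (n + 1 + 1), ‖((X - C z) * p).coeff i‖
      = (∑ i ∈ Finset.range (n + 1), ‖((X - C z) * p).coeff (i + 1)‖)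
        + ‖((X - C z) * p).coeff 0‖ := Finset.sum_range_succ' _ _
  rw [Len_eq_sum _ hd1, Len_eq_sum p (Nat.lt_succ_self n), L1]
  simp only [coeff_X_sub_C_mul, coeff_X_sub_C_mul_zero]
  have tri : ∑ i ∈ Finset.range (n + 1), ‖p.coeff i - z * p.coeff (i + 1)‖
      ≤ ∑ i ∈ Finset.range (n + 1),
          (‖p.coeff i‖ + ‖z‖ * ‖p.coeff (i + 1)‖) := by
    refine Finset.sum_le_sum fun i _ => ?_
    calc ‖p.coeff i - z * p.coeff (i + 1)‖
        ≤ ‖p.coeff i‖ + ‖z * p.coeff (i + 1)‖ :=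
          norm_sub_le _ _
      _ = _ := by rw [norm_mul]
  have key : ∑ i ∈ Finset.range (n + 1),
        (‖p.coeff i‖ + ‖z‖ * ‖p.coeff (i + 1)‖)
      + ‖-(z * p.coeff 0)‖
      = (1 + ‖z‖) * ∑ i ∈ Finset.range (n + 1), ‖p.coeff i‖ := by
    rw [Finset.sum_add_distrib, ← Finset.mul_sum, abs_shift_sum p (le_refl n),
      norm_neg, norm_mul]
    ring
  have hmax : (1 + ‖z‖) ≤ 2 * max 1 (‖z‖) := by
    rcases le_total (‖z‖) 1 with h | h
    · rw [max_eq_left h]; linarith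
    · rw [max_eq_right h]; linarith
  have hsum : 0 ≤ ∑ i ∈ Finset.range (n + 1), ‖p.coeff i‖ :=
    Finset.sum_nonneg fun i _ => norm_nonneg _
  nlinarith [norm_nonneg (-(z * p.coeff 0))]

lemma Len_C (c : ℂ) : Len (C c) = ‖c‖ := by
  rw [Len_eq_sum (C c) (m := 1) (by simp)]
  simp

lemma Len_prod_le (s : Multiset ℂ) (c : ℂ) :
    Len ((s.map fun z => X - C z).prod * C c)
      ≤ 2 ^ Multiset.card s * ((s.map fun z => max 1 (‖z‖)).prod * ‖c‖) := by
  induction s using Multiset.induction_on with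
  | empty => simp [Len_C]
  | cons a s ih =>
    have h0 : ((a ::ₘ s).map fun z => X - C z).prod * C c
        = (X - C a) * ((s.map fun z => X - C z).prod * C c) := by
      rw [Multiset.map_cons, Multiset.prod_cons, mul_assoc]
    rw [h0, Multiset.map_cons, Multiset.prod_cons, Multiset.card_cons]
    calc Len ((X - C a) * ((s.map fun z => X - C z).prod * C c))
        ≤ 2 * max 1 (‖a‖) * Len ((s.map fun z => X - C z).prod * C c) :=
          Len_mul_le _ _
      _ ≤ 2 * max 1 (‖a‖)
            * (2 ^ Multiset.card s * ((s.map fun z => max 1 (‖z‖)).prod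
                * ‖c‖)) := by
          refine mul_le_mul_of_nonneg_left ih ?_
          have : (1:ℝ) ≤ max 1 (‖a‖) := le_max_left _ _
          linarith
      _ = 2 ^ (Multiset.card s + 1)
            * (max 1 (‖a‖) * (s.map fun z => max 1 (‖z‖)).prod
                * ‖c‖) := by ring

lemma norm_mprod (s : Multiset ℂ) : ‖s.prod‖ = (s.map fun x => ‖x‖).prod :=
  map_multiset_prod (normHom : ℂ →*₀ ℝ) s

/-- The Mahler measure of a complex polynomial: |lc(f)| times the product of
max(1,|z|) over the roots of f counted with multiplicity. -/
noncomputable def Mea (f : Polynomial ℂ) : ℝ :=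
  ‖f.leadingCoeff‖ * ((f.roots.map fun z => max 1 (‖z‖)).prod)

/-- For f = ∑ aᵢ Xⁱ ∈ ℂ[X] of degree n with aₙ ≠ 0 (i.e. f ≠ 0):
2^{-n}·Len(f) ≤ Mea(f) ≤ ‖f‖, with Len(f) = ∑|aᵢ| and ‖f‖ = (∑|aᵢ|²)^{1/2}. -/
theorem len_mea_norm (f : Polynomial ℂ) (hf : f ≠ 0) :
    (2 : ℝ) ^ (-(f.natDegree : ℤ)) *
        (∑ i ∈ Finset.range (f.natDegree + 1), ‖f.coeff i‖) ≤ Mea f ∧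
      Mea f ≤ Real.sqrt (∑ i ∈ Finset.range (f.natDegree + 1), ‖f.coeff i‖ ^ 2) := by
  have hsplit : f.Splits := IsAlgClosed.splits f
  have hcard : f.roots.card = f.natDegree := splits_iff_card_roots.mp hsplit
  have heq : f = C f.leadingCoeff * (f.roots.map fun a => X - C a).prod :=
    hsplit.eq_prod_roots
  set n := f.natDegree
  set lc := f.leadingCoeff with hlc
  have hlc0 : lc ≠ 0 := leadingCoeff_ne_zero.mpr hf
  constructor
  · -- lower bound
    have h1 : Len f ≤ 2 ^ n * Mea f := by
      calc Len f = Len ((f.roots.map fun z => X - C z).prod * C lc) := by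
            conv_lhs => rw [heq, mul_comm]
        _ ≤ 2 ^ Multiset.card f.roots
              * ((f.roots.map fun z => max 1 (‖z‖)).prod * ‖lc‖) :=
            Len_prod_le _ _
        _ = 2 ^ n * Mea f := by rw [hcard, Mea]; ring
    have hLen : ∑ i ∈ Finset.range (n + 1), ‖f.coeff i‖ = Len f :=
      (Len_eq_sum f (Nat.lt_succ_self n)).symm
    rw [hLen, zpow_neg, zpow_natCast]
    rw [inv_mul_le_iff₀ (by positivity)]
    exact h1
  · -- upper bound (Landau)
    set g := C lc * (f.roots.map fac2).prod with hg
    have hfac0 : (0 : Polynomial ℂ) ∉ f.roots.map fac2 := by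
      intro h0
      obtain ⟨z, _, hz⟩ := Multiset.mem_map.mp h0
      have := fac2_natDegree z
      rw [hz] at this
      simp at this
    have hdeg : g.natDegree = n := by
      rw [hg, natDegree_C_mul hlc0, natDegree_multiset_prod _ hfac0,
        Multiset.map_map]
      have : (f.roots.map fun z => (fac2 z).natDegree) = f.roots.map fun _ => 1 := by
        exact Multiset.map_congr rfl fun z _ => fac2_natDegree z
      rw [Function.comp_def, this]
      simp [hcard]
    have hMea : ‖g.leadingCoeff‖ = Mea f := by
      rw [hg, leadingCoeff_mul, leadingCoeff_C, norm_mul, leadingCoeff_multiset_prod,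
        Multiset.map_map, norm_mprod, Multiset.map_map]
      congr 1
      refine congrArg Multiset.prod (Multiset.map_congr rfl fun z _ => ?_)
      exact fac2_leadingCoeff z
    have hN : Nsq g = Nsq f := by
      calc Nsq g = Nsq ((f.roots.map fac2).prod * C lc) := by rw [hg, mul_comm]
        _ = Nsq ((f.roots.map fun z => X - C z).prod * C lc) := (Nsq_prod_swap _ _).symm
        _ = Nsq f := by conv_rhs => rw [heq, mul_comm]
    have hsq : Mea f ^ 2 ≤ ∑ i ∈ Finset.range (n + 1), ‖f.coeff i‖ ^ 2 := by
      have h1 : Mea f ^ 2 = Complex.normSq (g.coeff n) := by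
        rw [← hMea, Complex.sq_norm, leadingCoeff, hdeg]
      have h2 : Complex.normSq (g.coeff n) ≤ ∑ i ∈ Finset.range (n + 1),
          Complex.normSq (g.coeff i) :=
        Finset.single_le_sum (f := fun i => Complex.normSq (g.coeff i))
          (fun i _ => Complex.normSq_nonneg _) (Finset.self_mem_range_succ n)
      have h3 : ∑ i ∈ Finset.range (n + 1), Complex.normSq (g.coeff i) = Nsq g :=
        (Nsq_eq_sum g (by omega)).symm
      have h4 : Nsq f = ∑ i ∈ Finset.range (n + 1), ‖f.coeff i‖ ^ 2 := by
        rw [Nsq_eq_sum f (Nat.lt_succ_self n)]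
        exact Finset.sum_congr rfl fun i _ => (Complex.sq_norm _).symm
      rw [h1]
      calc Complex.normSq (g.coeff n) ≤ _ := h2
        _ = _ := by rw [h3, hN, h4]
    exact Real.le_sqrt_of_sq_le hsq
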